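/- For every n ≥ 1 and every t ∈ [-1,1), the derivative in x at x = 1 of τ_n(x,t) := ((1-xt)/(x-t))(T_n(x)-T_n(t)) equals T_n'(1) - ((1+t)/(1-t))·(T_n(1) - T_n(t)), and this quantity lies in the interval [-T_n'(1), T_n'(1)]. -/

import Mathlib

/-- Chebyshev polynomial of the first kind, as a real function. -/
noncomputable def Tch (n : ℕ) (x : ℝ) : ℝ := (Polynomial.Chebyshev.T ℝ n).eval x

open Polynomial Polynomial.Chebyshev Real

lemma U_eval_one' : ∀ m : ℕ, (Polynomial.Chebyshev.U ℝ m).eval 1 = m + 1 := by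
  intro m
  induction m using Nat.twoStepInduction with
  | zero => simp [U_zero]
  | one => simp [U_one]; norm_num
  | more m ih1 ih2 =>
    have h : ((m : ℤ) + 2) = ((m + 2 : ℕ) : ℤ) := by push_cast; ring
    have := U_add_two ℝ m
    rw [h] at this
    rw [this]
    simp only [Polynomial.eval_sub, Polynomial.eval_mul, Polynomial.eval_ofNat,
      Polynomial.eval_X]
    have h1 : ((m : ℤ) + 1) = ((m + 1 : ℕ) : ℤ) := by push_cast; ring
    rw [h1, ih2, ih1]
    push_cast; ring

lemma Tch_one (n : ℕ) : Tch n 1 = 1 := by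
  have := Polynomial.Chebyshev.T_real_cos 0 (n : ℤ)
  simpa [Tch] using this

lemma deriv_Tch_one (n : ℕ) (hn : 1 ≤ n) :
    deriv (fun y : ℝ => Tch n y) 1 = (n : ℝ) ^ 2 := by
  have h := (Polynomial.hasDerivAt (Polynomial.Chebyshev.T ℝ n) (1 : ℝ)).deriv
  show deriv (fun y : ℝ => (Polynomial.Chebyshev.T ℝ n).eval y) 1 = (n : ℝ) ^ 2
  rw [h, Polynomial.Chebyshev.T_derivative_eq_U]
  have h2 : ((n : ℤ) - 1) = ((n - 1 : ℕ) : ℤ) := by omega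
  rw [h2]
  simp only [Polynomial.eval_mul, Polynomial.eval_intCast, U_eval_one']
  have : ((n - 1 : ℕ) : ℝ) + 1 = n := by
    have : (1:ℕ) ≤ n := hn
    push_cast [Nat.cast_sub this]; ring
  rw [this]; push_cast; ring

lemma abs_sin_nat_mul (n : ℕ) (x : ℝ) : |Real.sin (n * x)| ≤ n * |Real.sin x| := by
  induction n with
  | zero => simp
  | succ m ih =>
    have : Real.sin ((m + 1 : ℕ) * x) = Real.sin (m * x) * Real.cos x
        + Real.cos (m * x) * Real.sin x := by
      push_cast; rw [add_mul, one_mul, Real.sin_add]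
    rw [this]
    calc |Real.sin (m * x) * Real.cos x + Real.cos (m * x) * Real.sin x|
        ≤ |Real.sin (m * x) * Real.cos x| + |Real.cos (m * x) * Real.sin x| := abs_add_le _ _
      _ ≤ |Real.sin (m * x)| * 1 + 1 * |Real.sin x| := by
          rw [abs_mul, abs_mul]
          gcongr <;> [exact Real.abs_cos_le_one x; exact Real.abs_cos_le_one (m * x)]
      _ ≤ m * |Real.sin x| + |Real.sin x| := by
          rw [mul_one, one_mul]; linarith
      _ = (m + 1 : ℕ) * |Real.sin x| := by push_cast; ring

lemma one_sub_cos (y : ℝ) : 1 - Real.cos y = 2 * Real.sin (y / 2) ^ 2 := by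
  have h := Real.cos_two_mul (y / 2)
  have h2 : Real.sin (y / 2) ^ 2 + Real.cos (y / 2) ^ 2 = 1 := Real.sin_sq_add_cos_sq _
  have h3 : 2 * (y / 2) = y := by ring
  rw [h3] at h
  linarith

lemma key_ineq (n : ℕ) (t : ℝ) (ht : t ∈ Set.Icc (-1 : ℝ) 1) :
    1 - Tch n t ≤ (n : ℝ) ^ 2 * (1 - t) := by
  set θ := Real.arccos t with hθ
  have hct : Real.cos θ = t := Real.cos_arccos ht.1 ht.2
  have hT : Tch n t = Real.cos (n * θ) := by
    have h := Polynomial.Chebyshev.T_real_cos θ (n : ℤ)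
    rw [hct] at h
    rw [Tch, h]; push_cast; ring_nf
  rw [hT, ← hct, one_sub_cos, one_sub_cos]
  have h1 : |Real.sin ((n : ℝ) * θ / 2)| ≤ n * |Real.sin (θ / 2)| := by
    have : (n : ℝ) * θ / 2 = n * (θ / 2) := by ring
    rw [this]; exact abs_sin_nat_mul n (θ / 2)
  have h2 : Real.sin ((n : ℝ) * θ / 2) ^ 2 ≤ (n : ℝ) ^ 2 * Real.sin (θ / 2) ^ 2 := by
    have := sq_abs (Real.sin ((n : ℝ) * θ / 2))
    nlinarith [abs_nonneg (Real.sin ((n : ℝ) * θ / 2)), abs_nonneg (Real.sin (θ / 2)),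
      sq_abs (Real.sin (θ / 2))]
  nlinarith

lemma abs_Tch_le (n : ℕ) (t : ℝ) (ht : t ∈ Set.Icc (-1 : ℝ) 1) : |Tch n t| ≤ 1 := by
  have hct : Real.cos (Real.arccos t) = t := Real.cos_arccos ht.1 ht.2
  have hT : Tch n t = Real.cos (n * Real.arccos t) := by
    have h := Polynomial.Chebyshev.T_real_cos (Real.arccos t) (n : ℤ)
    rw [hct] at h
    rw [Tch, h]; push_cast; ring_nf
  rw [hT]; exact Real.abs_cos_le_one _

theorem stmt_1 (n : ℕ) (hn : 1 ≤ n) (t : ℝ) (ht : t ∈ Set.Ico (-1 : ℝ) 1) :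
    deriv (fun y : ℝ => (1 - y * t) / (y - t) * (Tch n y - Tch n t)) 1
      = (n : ℝ) ^ 2 - (1 + t) / (1 - t) * (Tch n 1 - Tch n t) ∧
    deriv (fun y : ℝ => (1 - y * t) / (y - t) * (Tch n y - Tch n t)) 1
      ∈ Set.Icc (-(n : ℝ) ^ 2) ((n : ℝ) ^ 2) := by
  have htlt : t < 1 := ht.2
  have htne : (1 : ℝ) - t ≠ 0 := by linarith
  have hne : (1 : ℝ) - t > 0 := by linarith
  -- derivative computation
  have hg : HasDerivAt (fun y : ℝ => (1 - y * t) / (y - t))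
      (((-t) * (1 - t) - (1 - 1 * t) * 1) / (1 - t) ^ 2) 1 := by
    have h1 : HasDerivAt (fun y : ℝ => 1 - y * t) (-t) 1 := by
      simpa using ((hasDerivAt_id (1:ℝ)).mul_const t).const_sub 1
    have h2 : HasDerivAt (fun y : ℝ => y - t) 1 1 := by
      simpa using (hasDerivAt_id (1:ℝ)).sub_const t
    exact h1.div h2 htne
  have hh : HasDerivAt (fun y : ℝ => Tch n y - Tch n t) ((n : ℝ) ^ 2) 1 := by
    have := (Polynomial.hasDerivAt (Polynomial.Chebyshev.T ℝ n) (1 : ℝ)).sub_const (Tch n t)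
    have hd : (Polynomial.derivative (Polynomial.Chebyshev.T ℝ n)).eval 1 = (n : ℝ) ^ 2 := by
      have h := (Polynomial.hasDerivAt (Polynomial.Chebyshev.T ℝ n) (1 : ℝ)).deriv
      rw [← h]; exact deriv_Tch_one n hn
    rw [hd] at this
    exact this
  have hf := hg.mul hh
  have hderiv := hf.deriv
  have hval : deriv (fun y : ℝ => (1 - y * t) / (y - t) * (Tch n y - Tch n t)) 1
      = (n : ℝ) ^ 2 - (1 + t) / (1 - t) * (Tch n 1 - Tch n t) := by
    rw [show (fun y : ℝ => (1 - y * t) / (y - t) * (Tch n y - Tch n t)) = ((fun y : ℝ => (1 - y * t) / (y - t)) * fun y => Tch n y - Tch n t) from rfl, hderiv, Tch_one]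
    have h1 : Tch n 1 - Tch n t = 1 - Tch n t := by rw [Tch_one]
    field_simp
    ring
  refine ⟨hval, ?_⟩
  rw [hval, Tch_one]
  have hIcc : t ∈ Set.Icc (-1 : ℝ) 1 := ⟨ht.1, le_of_lt htlt⟩
  have hTle : 0 ≤ 1 - Tch n t := by
    have h := abs_le.mp (abs_Tch_le n t hIcc)
    linarith [h.2]
  have hkey := key_ineq n t hIcc
  have hc : (1 + t) / (1 - t) ≥ 0 := by
    apply div_nonneg <;> linarith [ht.1]
  constructor
  · have hbd : (1 + t) / (1 - t) * (1 - Tch n t) ≤ 2 * (n : ℝ) ^ 2 := by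
      rw [div_mul_eq_mul_div, div_le_iff₀ hne]
      nlinarith [ht.1, hTle, hkey]
    linarith
  · nlinarith [mul_nonneg hc hTle]
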